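/- Let P_BB be a d_B×d_B real symmetric positive definite matrix, P_OO a d_O×d_O real symmetric matrix, P_OB a d_O×d_B real matrix, N an m×m real symmetric positive definite matrix, and Θ an m×d_B real matrix. Define Q = P_OB P_BB⁻¹, S = P_OO − Q P_BB Qᵀ, and P_BB' = (P_BB⁻¹ + Θᵀ N⁻¹ Θ)⁻¹. Then P_OO − P_OB Θᵀ (Θ P_BB Θᵀ + N)⁻¹ Θ P_OBᵀ = S + Q P_BB' Qᵀ. (Theorem 1, claim i, second part.) -/

import Mathlib

open Matrix

/-- Theorem 1, claim i, second part: with `Q = P_OB P_BB⁻¹`,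
`S = P_OO − Q P_BB Qᵀ` and `P_BB' = (P_BB⁻¹ + Θᵀ N⁻¹ Θ)⁻¹`,
`P_OO − P_OB Θᵀ (Θ P_BB Θᵀ + N)⁻¹ Θ P_OBᵀ = S + Q P_BB' Qᵀ`. -/
theorem covariance_update_offblock {dB dO m : ℕ}
    (PBB : Matrix (Fin dB) (Fin dB) ℝ) (POO : Matrix (Fin dO) (Fin dO) ℝ)
    (POB : Matrix (Fin dO) (Fin dB) ℝ) (N : Matrix (Fin m) (Fin m) ℝ)
    (Θ : Matrix (Fin m) (Fin dB) ℝ)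
    (hPBB : PBB.PosDef) (hPOO : POO.IsSymm) (hN : N.PosDef)
    (Q : Matrix (Fin dO) (Fin dB) ℝ) (hQ : Q = POB * PBB⁻¹)
    (S : Matrix (Fin dO) (Fin dO) ℝ) (hS : S = POO - Q * PBB * Qᵀ)
    (PBB' : Matrix (Fin dB) (Fin dB) ℝ)
    (hPBB' : PBB' = (PBB⁻¹ + Θᵀ * N⁻¹ * Θ)⁻¹) :
    POO - POB * Θᵀ * (Θ * PBB * Θᵀ + N)⁻¹ * (Θ * POBᵀ) = S + Q * PBB' * Qᵀ := by
  have hPBBu : IsUnit PBB := hPBB.isUnit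
  have hNu : IsUnit N := hN.isUnit
  -- positive definiteness of N + Θ PBB Θᵀ
  have hPSD : (Θ * PBB * Θᵀ).PosSemidef := by
    have := hPBB.posSemidef.mul_mul_conjTranspose_same Θ
    simpa [conjTranspose_eq_transpose_of_trivial] using this
  have hBig : (N + Θ * PBB * Θᵀ).PosDef := hN.add_posSemidef hPSD
  have hNd := (Matrix.isUnit_iff_isUnit_det N).mp hNu
  have hPBBd := (Matrix.isUnit_iff_isUnit_det PBB).mp hPBBu
  have hsym : PBBᵀ = PBB := hPBB.isHermitian.eq
  have hBigu : IsUnit (N⁻¹⁻¹ + Θ * PBB⁻¹⁻¹ * Θᵀ) := by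
    rw [Matrix.nonsing_inv_nonsing_inv _ hNd, Matrix.nonsing_inv_nonsing_inv _ hPBBd]
    exact hBig.isUnit
  -- Woodbury
  have hW : PBB' = PBB - PBB * Θᵀ * (N + Θ * PBB * Θᵀ)⁻¹ * Θ * PBB := by
    rw [hPBB']
    have := Matrix.add_mul_mul_inv_eq_sub (PBB⁻¹) Θᵀ (N⁻¹) Θ
      (Matrix.isUnit_nonsing_inv_iff.mpr hPBBu) (Matrix.isUnit_nonsing_inv_iff.mpr hNu) hBigu
    rw [this, Matrix.nonsing_inv_nonsing_inv _ hNd, Matrix.nonsing_inv_nonsing_inv _ hPBBd]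
  have hQP : Q * PBB = POB := by
    rw [hQ, Matrix.mul_assoc, Matrix.nonsing_inv_mul _ hPBBd, Matrix.mul_one]
  have hPQ : PBB * Qᵀ = POBᵀ := by
    have : Qᵀ = PBB⁻¹ * POBᵀ := by
      rw [hQ, Matrix.transpose_mul, Matrix.transpose_nonsing_inv, hsym]
    rw [this, ← Matrix.mul_assoc, Matrix.mul_nonsing_inv _ hPBBd, Matrix.one_mul]
  rw [hS, hW]
  have hcomm : Θ * PBB * Θᵀ + N = N + Θ * PBB * Θᵀ := add_comm _ _
  rw [hcomm]
  have expand : Q * (PBB - PBB * Θᵀ * (N + Θ * PBB * Θᵀ)⁻¹ * Θ * PBB) * Qᵀ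
      = Q * PBB * Qᵀ - POB * Θᵀ * (N + Θ * PBB * Θᵀ)⁻¹ * (Θ * POBᵀ) := by
    rw [Matrix.mul_sub, Matrix.sub_mul]
    congr 1
    calc Q * (PBB * Θᵀ * (N + Θ * PBB * Θᵀ)⁻¹ * Θ * PBB) * Qᵀ
        = (Q * PBB) * Θᵀ * (N + Θ * PBB * Θᵀ)⁻¹ * (Θ * (PBB * Qᵀ)) := by
          simp only [Matrix.mul_assoc]
      _ = POB * Θᵀ * (N + Θ * PBB * Θᵀ)⁻¹ * (Θ * POBᵀ) := by rw [hQP, hPQ]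
  rw [expand]
  abel
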